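/- Under the stated context, α and β are algebraic integers (i.e., integral over ℤ); moreover α·β = y, √C₁·x + i√C₂ = αᵖ, and √C₁·x − i√C₂ = βᵖ. -/
import Mathlib


open Polynomial IntermediateField

noncomputable def sqrtneg (c : ℕ) : ℂ := Complex.I * Real.sqrt c

lemma sqrtneg_sq (c : ℕ) : sqrtneg c ^ 2 = -(c : ℂ) := by
  have h : ((Real.sqrt c : ℝ) : ℂ) ^ 2 = (c : ℂ) := by
    rw [← Complex.ofReal_pow, Real.sq_sqrt (by positivity)]
    norm_num
  simp [sqrtneg, mul_pow, Complex.I_sq, h]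

lemma sqrtneg_isIntegral (c : ℕ) : IsIntegral ℚ (sqrtneg c) := by
  refine ⟨X ^ 2 + C (c : ℚ), monic_X_pow_add_C _ two_ne_zero, ?_⟩
  simp [eval₂_add, eval₂_pow, sqrtneg_sq c]

/-- The field `K = ℚ(√-c)`, realised as the subfield of `ℂ` generated by `i·√c`. -/
noncomputable def Kf (c : ℕ) : IntermediateField ℚ ℂ := ℚ⟮sqrtneg c⟯

/-- The class number of `ℚ(√-c)`. -/
noncomputable def classNumberK (c : ℕ) : ℕ :=
  haveI : FiniteDimensional ℚ (Kf c) :=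
    IntermediateField.adjoin.finiteDimensional (sqrtneg_isIntegral c)
  haveI : NumberField (Kf c) := ⟨⟩
  NumberField.classNumber (Kf c)

theorem stmt5 (C₁ C₂ c d : ℕ) (hC₁pos : 0 < C₁) (hC₁sqf : Squarefree C₁)
    (hC₂pos : 0 < C₂) (hcop : Nat.gcd C₁ C₂ = 1) (hmod8 : C₁ * C₂ % 8 ≠ 7)
    (hcpos : 0 < c) (hdpos : 0 < d) (hcsqf : Squarefree c)
    (hfact : C₁ * C₂ = c * d ^ 2)
    (p : ℕ) (hp : p.Prime) (hpodd : Odd p)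
    (hpcl : ¬ p ∣ classNumberK c)
    (hp3 : p = 3 → ¬ ∃ m : ℤ, (C₁ : ℤ) * (C₂ : ℤ) = 3 * m ^ 2)
    (x y : ℕ) (hxpos : 0 < x) (hypos : 0 < y)
    (heq : C₁ * x ^ 2 + C₂ = y ^ p)
    (hgcd : Nat.gcd (Nat.gcd (C₁ * x ^ 2) C₂) (y ^ p) = 1)
    (δ : ℂ) (hδK : δ ∈ Kf c) (hδint : IsIntegral ℤ δ)
    (hδeq : (C₁ : ℂ) ^ ((p - 1) / 2) * ((C₁ : ℂ) * (x : ℂ) + (d : ℂ) * sqrtneg c) = δ ^ p)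
    (α β : ℂ) (hα : α = δ / (Real.sqrt C₁ : ℂ))
    (hβ : β = (starRingEnd ℂ) δ / (Real.sqrt C₁ : ℂ))
    :
    IsIntegral ℤ α ∧ IsIntegral ℤ β ∧
    α * β = (y : ℂ) ∧
    (Real.sqrt C₁ : ℂ) * (x : ℂ) + Complex.I * (Real.sqrt C₂ : ℂ) = α ^ p ∧
    (Real.sqrt C₁ : ℂ) * (x : ℂ) - Complex.I * (Real.sqrt C₂ : ℂ) = β ^ p := by
  set s1 : ℂ := (Real.sqrt C₁ : ℂ) with hs1
  set s2 : ℂ := (Real.sqrt C₂ : ℂ) with hs2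
  have hs1sq : s1 ^ 2 = (C₁ : ℂ) := by
    rw [hs1, ← Complex.ofReal_pow, Real.sq_sqrt (by positivity)]
    norm_num
  have hs2sq : s2 ^ 2 = (C₂ : ℂ) := by
    rw [hs2, ← Complex.ofReal_pow, Real.sq_sqrt (by positivity)]
    norm_num
  have hs1ne : s1 ≠ 0 := by
    rw [hs1]
    simp only [ne_eq, Complex.ofReal_eq_zero]
    exact ne_of_gt (Real.sqrt_pos.mpr (by exact_mod_cast hC₁pos))
  have hC1ne : (C₁ : ℂ) ≠ 0 := by exact_mod_cast hC₁pos.ne'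
  have hrR : Real.sqrt C₁ * Real.sqrt C₂ = (d : ℝ) * Real.sqrt c := by
    rw [← Real.sqrt_mul (by positivity)]
    have : ((C₁ : ℝ)) * (C₂ : ℝ) = (c : ℝ) * (d : ℝ) ^ 2 := by exact_mod_cast hfact
    rw [this, Real.sqrt_mul (by positivity), Real.sqrt_sq (by positivity)]
    ring
  have hmulC : s1 * s2 = (d : ℂ) * ((Real.sqrt c : ℝ) : ℂ) := by
    rw [hs1, hs2, ← Complex.ofReal_mul, hrR]
    push_cast
    ring
  set k := (p - 1) / 2 with hk
  have hpk : p = 2 * k + 1 := by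
    obtain ⟨m, hm⟩ := hpodd
    omega
  have hs1p : s1 ^ p = (C₁ : ℂ) ^ k * s1 := by
    rw [hpk, pow_succ, pow_mul, hs1sq]
  have hCkne : (C₁ : ℂ) ^ k ≠ 0 := pow_ne_zero _ hC1ne
  have hy : (C₁ : ℂ) * (x : ℂ) ^ 2 + (C₂ : ℂ) = (y : ℂ) ^ p := by exact_mod_cast heq
  have hds : (d : ℂ) * sqrtneg c = Complex.I * (s1 * s2) := by
    rw [hmulC, sqrtneg]; ring
  have hαp : α ^ p = s1 * (x : ℂ) + Complex.I * s2 := by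
    rw [hα, div_pow, ← hδeq, hs1p]
    rw [div_eq_iff (by exact mul_ne_zero hCkne hs1ne), hds]
    linear_combination (-(C₁:ℂ)^k * (x:ℂ)) * hs1sq
  have hconjsq : (starRingEnd ℂ) (sqrtneg c) = -sqrtneg c := by
    simp [sqrtneg, map_mul, Complex.conj_I, Complex.conj_ofReal]
  have hconj : ((starRingEnd ℂ) δ) ^ p =
      (C₁ : ℂ) ^ k * ((C₁ : ℂ) * (x : ℂ) - (d : ℂ) * sqrtneg c) := by
    rw [← map_pow, ← hδeq]
    simp only [map_mul, map_add, map_pow, map_natCast, hconjsq]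
    ring
  have hβp : β ^ p = s1 * (x : ℂ) - Complex.I * s2 := by
    rw [hβ, div_pow, hconj, hs1p]
    rw [div_eq_iff (by exact mul_ne_zero hCkne hs1ne), hds]
    linear_combination (-(C₁:ℂ)^k * (x:ℂ)) * hs1sq
  have hC2' : (C₂ : ℂ) = -(Complex.I * s2) ^ 2 := by
    rw [mul_pow, Complex.I_sq, hs2sq]; ring
  have habp : (α * β) ^ p = (y : ℂ) ^ p := by
    rw [mul_pow, hαp, hβp, ← hy, hC2', ← hs1sq]
    ring
  have habr : α * β = ((Complex.normSq δ / C₁ : ℝ) : ℂ) := by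
    rw [hα, hβ, div_mul_div_comm, mul_comm δ ((starRingEnd ℂ) δ), mul_comm ((starRingEnd ℂ) δ) δ,
      Complex.mul_conj, hs1, ← Complex.ofReal_mul, Real.mul_self_sqrt (by positivity)]
    push_cast
    ring
  have hry : (Complex.normSq δ / C₁ : ℝ) = (y : ℝ) := by
    have h2 : ((Complex.normSq δ / C₁ : ℝ)) ^ p = ((y : ℝ)) ^ p := by
      have := habp
      rw [habr] at this
      exact_mod_cast this
    exact (hpodd.strictMono_pow (R := ℝ)).injective h2
  have hab : α * β = (y : ℂ) := by rw [habr, hry]; norm_cast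
  have hint : ∀ z : ℂ, (z ^ p = s1 * (x : ℂ) + Complex.I * s2 ∨
      z ^ p = s1 * (x : ℂ) - Complex.I * s2) → IsIntegral ℤ z := by
    intro z hz
    refine ⟨X ^ (p * 4) + (Polynomial.C (2 * (y : ℤ) ^ p - 4 * (C₁ : ℤ) * (x : ℤ) ^ 2) *
      X ^ (p * 2) + Polynomial.C ((y : ℤ) ^ (p * 2))), ?_, ?_⟩
    · apply monic_X_pow_add
      have hppos := hp.pos
      have h1 : degree (Polynomial.C (2 * (y : ℤ) ^ p - 4 * (C₁ : ℤ) * (x : ℤ) ^ 2) *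
          X ^ (p * 2) : ℤ[X]) ≤ ((p * 2 : ℕ) : WithBot ℕ) := by
        refine (degree_mul_le _ _).trans ?_
        rw [degree_X_pow]
        refine (add_le_add degree_C_le le_rfl).trans ?_
        rw [zero_add]
      have h1' : degree (Polynomial.C (2 * (y : ℤ) ^ p - 4 * (C₁ : ℤ) * (x : ℤ) ^ 2) *
          X ^ (p * 2) : ℤ[X]) < ((p * 4 : ℕ) : WithBot ℕ) :=
        h1.trans_lt (by exact_mod_cast (by omega : p * 2 < p * 4))
      have h2 : degree (Polynomial.C ((y : ℤ) ^ (p * 2)) : ℤ[X]) < ((p * 4 : ℕ) : WithBot ℕ) :=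
        degree_C_le.trans_lt (by exact_mod_cast (by omega : 0 < p * 4))
      exact (degree_add_le _ _).trans_lt (max_lt h1' h2)
    · rw [eval₂_add, eval₂_add, eval₂_mul, eval₂_C, eval₂_C, eval₂_X_pow, eval₂_X_pow]
      simp only [algebraMap_int_eq, eq_intCast]
      push_cast
      rw [pow_mul, pow_mul, pow_mul, ← hy, hC2', ← hs1sq]
      rcases hz with h | h <;> rw [h] <;> ring
  exact ⟨hint α (Or.inl hαp), hint β (Or.inr hβp), hab, hαp.symm, hβp.symm⟩
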